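/- The conditional diameter of the tree T^{s+1}_n (path x_1...x_{n-1} with a pendant vertex attached to x_{s+1}) satisfies D(T^{s+1}_n; s) = n - 2s, provided n \ge 2s + 3. -/
import Mathlib


open SimpleGraph Finset

/-- Wiener index: sum of distances over unordered pairs. -/
noncomputable def wiener {V : Type*} [Fintype V] (G : SimpleGraph V) : ℕ :=
  (∑ u : V, ∑ v : V, G.dist u v) / 2

/-- Sum of distances from a vertex. -/
noncomputable def distSum {V : Type*} [Fintype V] (G : SimpleGraph V) (u : V) : ℕ :=
  ∑ v : V, G.dist u v

/-- Distance between two vertex subsets. -/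
noncomputable def setDist {V : Type*} (G : SimpleGraph V) (A B : Finset V) : ℕ :=
  sInf {d | ∃ x ∈ A, ∃ y ∈ B, G.dist x y = d}

/-- Conditional diameter `D(G; s)`. -/
noncomputable def condDiam {V : Type*} (G : SimpleGraph V) (s : ℕ) : ℕ :=
  sSup {d | ∃ A B : Finset V, A.card = s ∧ B.card = s ∧ setDist G A B = d}

/-- `T^i_n` (1-based `i`): path `x_1 … x_{n-1}` (vertices `0,…,n-2`) with a pendant
vertex (vertex `n-1`) attached to `x_i` (vertex `i-1`). -/
def Tpend (n i : ℕ) : SimpleGraph (Fin n) :=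
  SimpleGraph.fromRel (fun u v =>
    (u.val + 1 = v.val ∧ v.val ≤ n - 2) ∨ (u.val = i - 1 ∧ v.val = n - 1))

/-- `T^{i,j}_n` (1-based): path `x_1 … x_{n-2}` (vertices `0,…,n-3`) with pendant
vertices `n-2` attached to `x_i` and `n-1` attached to `x_j`. -/
def Tpend2 (n i j : ℕ) : SimpleGraph (Fin n) :=
  SimpleGraph.fromRel (fun u v =>
    (u.val + 1 = v.val ∧ v.val ≤ n - 3) ∨ (u.val = i - 1 ∧ v.val = n - 2) ∨
      (u.val = j - 1 ∧ v.val = n - 1))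

/-- `T^{i(2)}_n` (1-based): path `x_1 … x_{n-2}` with a pendant path `x_i - w_1 - w_2`
(`w_1 = n-2`, `w_2 = n-1`). -/
def TpendPath2 (n i : ℕ) : SimpleGraph (Fin n) :=
  SimpleGraph.fromRel (fun u v =>
    (u.val + 1 = v.val ∧ v.val ≤ n - 3) ∨ (u.val = i - 1 ∧ v.val = n - 2) ∨
      (u.val = n - 2 ∧ v.val = n - 1))



/-- Separation counting: a minimal cross pair gives disjoint interval. -/
lemma sep_count (N e : ℕ) (X Y : Finset ℕ) (hX : ∀ a ∈ X, a < N) (hY : ∀ b ∈ Y, b < N)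
    (hXne : X.Nonempty) (hYne : Y.Nonempty) (he : 1 ≤ e)
    (hsep : ∀ a ∈ X, ∀ b ∈ Y, a + e ≤ b ∨ b + e ≤ a) :
    ∃ l r : ℕ, e ≤ r - l ∧ r < N ∧ Disjoint X Y ∧ Disjoint (X ∪ Y) (Finset.Ioo l r) ∧
      (X ∪ Y ∪ Finset.Ioo l r) ⊆ Finset.range N := by
  classical
  have hXY : Disjoint X Y := by
    rw [Finset.disjoint_left]
    intro a haX haY
    rcases hsep a haX a haY with h | h <;> omega
  set D := (X ×ˢ Y).image (fun p => (p.1 - p.2) + (p.2 - p.1)) with hD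
  have hDne : D.Nonempty := (hXne.product hYne).image _
  set c := D.min' hDne with hc
  obtain ⟨p, hp, hpc⟩ := Finset.mem_image.1 (D.min'_mem hDne)
  obtain ⟨a₀, b₀⟩ := p
  simp only [Finset.mem_product] at hp
  obtain ⟨ha₀, hb₀⟩ := hp
  have hmin : ∀ a ∈ X, ∀ b ∈ Y, c ≤ (a - b) + (b - a) := by
    intro a ha b hb
    exact D.min'_le _ (Finset.mem_image.2 ⟨(a, b), Finset.mem_product.2 ⟨ha, hb⟩, rfl⟩)
  have hec : e ≤ c := by
    rcases hsep a₀ ha₀ b₀ hb₀ with h | h <;> omega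
  have key : ∀ l r : ℕ, (l = a₀ ∧ r = b₀) ∨ (l = b₀ ∧ r = a₀) → l ≤ r →
      Disjoint (X ∪ Y) (Finset.Ioo l r) := by
    intro l r hlr hle
    rw [Finset.disjoint_left]
    intro t ht htI
    rw [Finset.mem_Ioo] at htI
    rcases Finset.mem_union.1 ht with htX | htY
    · have := hmin t htX b₀ hb₀
      rcases hlr with ⟨h1, h2⟩ | ⟨h1, h2⟩ <;> omega
    · have := hmin a₀ ha₀ t htY
      rcases hlr with ⟨h1, h2⟩ | ⟨h1, h2⟩ <;> omega
  have hsub : ∀ l r : ℕ, r < N → (X ∪ Y ∪ Finset.Ioo l r) ⊆ Finset.range N := by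
    intro l r hr t ht
    rw [Finset.mem_range]
    rcases Finset.mem_union.1 ht with ht | ht
    · rcases Finset.mem_union.1 ht with ht | ht
      · exact hX t ht
      · exact hY t ht
    · rw [Finset.mem_Ioo] at ht; omega
  rcases le_total a₀ b₀ with h | h
  · exact ⟨a₀, b₀, by omega, hY b₀ hb₀, hXY, key _ _ (Or.inl ⟨rfl, rfl⟩) h, hsub _ _ (hY b₀ hb₀)⟩
  · exact ⟨b₀, a₀, by omega, hX a₀ ha₀, hXY, key _ _ (Or.inr ⟨rfl, rfl⟩) h, hsub _ _ (hX a₀ ha₀)⟩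

lemma sep_card (N e : ℕ) (X Y : Finset ℕ) (hX : ∀ a ∈ X, a < N) (hY : ∀ b ∈ Y, b < N)
    (hXne : X.Nonempty) (hYne : Y.Nonempty) (he : 1 ≤ e)
    (hsep : ∀ a ∈ X, ∀ b ∈ Y, a + e ≤ b ∨ b + e ≤ a) : X.card + Y.card + e ≤ N + 1 := by
  classical
  obtain ⟨l, r, hlr, hrN, hXY, hdisj, hsub⟩ := sep_count N e X Y hX hY hXne hYne he hsep
  have hcard : (X ∪ Y ∪ Finset.Ioo l r).card = X.card + Y.card + (r - l - 1) := by
    rw [Finset.card_union_of_disjoint hdisj, Finset.card_union_of_disjoint hXY, Nat.card_Ioo]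
  have hle := Finset.card_le_card hsub
  rw [hcard, Finset.card_range] at hle
  omega

/-- Core contradiction lemma. -/
lemma core (N e s₀ : ℕ) (X Y : Finset ℕ) (hX : ∀ a ∈ X, a < N) (hY : ∀ b ∈ Y, b < N)
    (he : 2 ≤ e) (hsep : ∀ a ∈ X, ∀ b ∈ Y, a + e ≤ b ∨ b + e ≤ a)
    (hYne : Y.Nonempty) (hs₀ : s₀ ∈ X)
    (hcount : N + 1 ≤ X.card + Y.card + e)
    (hL : X.card < s₀ + 1) (hR : X.card < N - s₀) : False := by
  classical
  obtain ⟨l, r, hlr, hrN, hXY, hdisj, hsub⟩ :=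
    sep_count N e X Y hX hY ⟨s₀, hs₀⟩ hYne (by omega) hsep
  have hcard : (X ∪ Y ∪ Finset.Ioo l r).card = X.card + Y.card + (r - l - 1) := by
    rw [Finset.card_union_of_disjoint hdisj, Finset.card_union_of_disjoint hXY, Nat.card_Ioo]
  have hle : (X ∪ Y ∪ Finset.Ioo l r).card ≤ N := by
    simpa using Finset.card_le_card hsub
  -- tightness
  have huniv : X ∪ Y ∪ Finset.Ioo l r = Finset.range N := by
    apply Finset.eq_of_subset_of_card_le hsub
    rw [hcard, Finset.card_range]; omega
  have hmem : ∀ j, j < N → j ∈ X ∪ Y ∪ Finset.Ioo l r := by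
    intro j hj; rw [huniv, Finset.mem_range]; exact hj
  have hs₀N : s₀ < N := hX s₀ hs₀
  have hs₀I : s₀ ∉ Finset.Ioo l r :=
    fun h => (Finset.disjoint_left.1 hdisj (Finset.mem_union_left _ hs₀)) h
  rw [Finset.mem_Ioo] at hs₀I
  push_neg at hs₀I
  -- helper to decide membership
  have step : ∀ j j' : ℕ, j < N → j' ∈ X → (j + 1 = j' ∨ j' + 1 = j) →
      j ∉ Finset.Ioo l r → j ∈ X := by
    intro j j' hjN hj' hadj hjI
    rcases Finset.mem_union.1 (hmem j hjN) with hj | hj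
    · rcases Finset.mem_union.1 hj with hj | hj
      · exact hj
      · rcases hsep j' hj' j hj with h | h <;> omega
    · exact absurd hj hjI
  by_cases hcase : s₀ ≤ l
  · -- interval to the right of s₀; fill downward
    have down : ∀ k, k ≤ s₀ → s₀ - k ∈ X := by
      intro k
      induction k with
      | zero => intro _; simpa using hs₀
      | succ k ih =>
        intro hk
        have h1 : s₀ - k ∈ X := ih (by omega)
        apply step (s₀ - (k+1)) (s₀ - k) (by omega) h1 (by omega)
        rw [Finset.mem_Ioo]; omega
    have hsubX : Finset.range (s₀ + 1) ⊆ X := by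
      intro j hj
      rw [Finset.mem_range] at hj
      have := down (s₀ - j) (by omega)
      have hjj : s₀ - (s₀ - j) = j := by omega
      rwa [hjj] at this
    have := Finset.card_le_card hsubX
    rw [Finset.card_range] at this
    omega
  · -- interval to the left; fill upward
    have hrs : r ≤ s₀ := by omega
    have up : ∀ k, s₀ + k < N → s₀ + k ∈ X := by
      intro k
      induction k with
      | zero => intro _; simpa using hs₀
      | succ k ih =>
        intro hk
        have h1 : s₀ + k ∈ X := ih (by omega)
        apply step (s₀ + (k+1)) (s₀ + k) hk h1 (by omega)
        rw [Finset.mem_Ioo]; omega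
    have hsubX : Finset.Ico s₀ N ⊆ X := by
      intro j hj
      rw [Finset.mem_Ico] at hj
      have := up (j - s₀) (by omega)
      have hjj : s₀ + (j - s₀) = j := by omega
      rwa [hjj] at this
    have := Finset.card_le_card hsubX
    rw [Nat.card_Ico] at this
    omega

section TP
variable {n s : ℕ}

/-- projection coordinate -/
def fv (n s : ℕ) (u : Fin n) : ℕ := if u.val = n - 1 then s else u.val

lemma tp_adj_succ (hn : 2*s+3 ≤ n) (u v : Fin n) (h1 : u.val + 1 = v.val) (h2 : v.val ≤ n - 2) :
    (Tpend n (s+1)).Adj u v := by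
  rw [Tpend, SimpleGraph.fromRel_adj]
  exact ⟨fun h => by rw [h] at h1; omega, Or.inl (Or.inl ⟨h1, h2⟩)⟩

lemma tp_adj_pend (hn : 2*s+3 ≤ n) (u v : Fin n) (h1 : u.val = s) (h2 : v.val = n - 1) :
    (Tpend n (s+1)).Adj u v := by
  rw [Tpend, SimpleGraph.fromRel_adj]
  refine ⟨fun h => ?_, Or.inl (Or.inr ⟨by omega, h2⟩)⟩
  rw [h] at h1; omega

lemma tp_walk_path (hn : 2*s+3 ≤ n) : ∀ (k : ℕ) (u v : Fin n), v.val ≤ n - 2 →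
    u.val + k = v.val → ∃ w : (Tpend n (s+1)).Walk u v, w.length ≤ k := by
  intro k
  induction k with
  | zero =>
    intro u v hv h
    have : u = v := Fin.ext (by omega)
    subst this
    exact ⟨SimpleGraph.Walk.nil, by simp⟩
  | succ k ih =>
    intro u v hv h
    have hu1 : u.val + 1 < n := by omega
    set u' : Fin n := ⟨u.val + 1, hu1⟩ with hu'
    have hadj : (Tpend n (s+1)).Adj u u' := tp_adj_succ hn u u' rfl (by simp [hu']; omega)
    obtain ⟨w, hw⟩ := ih u' v hv (by simp [hu']; omega)
    exact ⟨SimpleGraph.Walk.cons hadj w, by simp [SimpleGraph.Walk.length_cons]; omega⟩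

lemma tp_walk_between (hn : 2*s+3 ≤ n) (u v : Fin n) (hu : u.val ≤ n - 2) (hv : v.val ≤ n - 2) :
    ∃ w : (Tpend n (s+1)).Walk u v, w.length ≤ (u.val - v.val) + (v.val - u.val) := by
  rcases le_total u.val v.val with h | h
  · obtain ⟨w, hw⟩ := tp_walk_path hn (v.val - u.val) u v hv (by omega)
    exact ⟨w, by omega⟩
  · obtain ⟨w, hw⟩ := tp_walk_path hn (u.val - v.val) v u hu (by omega)
    exact ⟨w.reverse, by rw [SimpleGraph.Walk.length_reverse]; omega⟩

lemma tp_dist_path_le (hn : 2*s+3 ≤ n) (u v : Fin n) (hu : u.val ≤ n - 2) (hv : v.val ≤ n - 2) :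
    (Tpend n (s+1)).dist u v ≤ (u.val - v.val) + (v.val - u.val) := by
  obtain ⟨w, hw⟩ := tp_walk_between hn u v hu hv
  exact le_trans (SimpleGraph.dist_le w) hw

lemma tp_reach_path (hn : 2*s+3 ≤ n) (u v : Fin n) (hu : u.val ≤ n - 2) (hv : v.val ≤ n - 2) :
    (Tpend n (s+1)).Reachable u v := by
  obtain ⟨w, _⟩ := tp_walk_between hn u v hu hv
  exact w.reachable

lemma tp_dist_pend_le (hn : 2*s+3 ≤ n) (u v : Fin n) (hu : u.val ≤ n - 2) (hv : v.val = n - 1) :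
    (Tpend n (s+1)).dist u v ≤ (u.val - s) + (s - u.val) + 1 := by
  have hsn : s ≤ n - 2 := by omega
  have hsn' : s < n := by omega
  obtain ⟨w, hw⟩ := tp_walk_between hn u ⟨s, hsn'⟩ hu (by simpa using hsn)
  have hadj : (Tpend n (s+1)).Adj ⟨s, hsn'⟩ v := tp_adj_pend hn _ v rfl hv
  refine le_trans (SimpleGraph.dist_le (w.concat hadj)) ?_
  rw [SimpleGraph.Walk.length_concat]
  simp at hw ⊢
  omega

lemma tp_adj_fv (hn : 2*s+3 ≤ n) (u x : Fin n) (h : (Tpend n (s+1)).Adj u x) :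
    fv n s x ≤ fv n s u + 1 ∧ fv n s u ≤ fv n s x + 1 := by
  rw [Tpend, SimpleGraph.fromRel_adj] at h
  obtain ⟨-, h⟩ := h
  have hu := u.isLt
  have hx := x.isLt
  unfold fv
  rcases h with (⟨h1, h2⟩ | ⟨h1, h2⟩) | (⟨h1, h2⟩ | ⟨h1, h2⟩) <;>
    [skip; skip; skip; skip] <;>
    · split_ifs <;> omega

lemma tp_walk_lb (hn : 2*s+3 ≤ n) (u v : Fin n) (w : (Tpend n (s+1)).Walk u v) :
    fv n s v ≤ fv n s u + w.length ∧ fv n s u ≤ fv n s v + w.length := by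
  induction w with
  | nil => simp
  | cons h w ih =>
    have := tp_adj_fv hn _ _ h
    rw [SimpleGraph.Walk.length_cons]
    omega

lemma tp_dist_path_ge (hn : 2*s+3 ≤ n) (u v : Fin n) (hu : u.val ≤ n - 2) (hv : v.val ≤ n - 2) :
    (u.val - v.val) + (v.val - u.val) ≤ (Tpend n (s+1)).dist u v := by
  obtain ⟨w, hw⟩ := (tp_reach_path hn u v hu hv).exists_walk_length_eq_dist
  have := tp_walk_lb hn u v w
  have hfu : fv n s u = u.val := by unfold fv; split_ifs <;> omega
  have hfv : fv n s v = v.val := by unfold fv; split_ifs <;> omega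
  omega


lemma tp_pair (hs : 1 ≤ s) (hn : 2*s+3 ≤ n) (A B : Finset (Fin n))
    (hA : A.card = s) (hB : B.card = s) (hPB : ∀ b ∈ B, b.val ≠ n - 1) :
    ∃ a ∈ A, ∃ b ∈ B, (Tpend n (s+1)).dist a b ≤ n - 2*s := by
  classical
  by_contra hcon
  push_neg at hcon
  have hd : ∀ a ∈ A, ∀ b ∈ B, n - 2*s + 1 ≤ (Tpend n (s+1)).dist a b := by
    intro a ha b hb
    have := hcon a ha b hb
    omega
  set Y := B.image Fin.val with hY
  have hYcard : Y.card = s := by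
    rw [hY, Finset.card_image_of_injective _ Fin.val_injective, hB]
  have hYb : ∀ y ∈ Y, y < n - 1 := by
    intro y hy
    obtain ⟨b, hbB, rfl⟩ := Finset.mem_image.1 hy
    have := hPB b hbB
    have := b.isLt
    omega
  have hYne : Y.Nonempty := Finset.card_pos.1 (by omega)
  have hsepA : ∀ a ∈ A, a.val ≠ n - 1 → ∀ y ∈ Y,
      a.val + (n - 2*s + 1) ≤ y ∨ y + (n - 2*s + 1) ≤ a.val := by
    intro a ha hav y hy
    obtain ⟨b, hbB, rfl⟩ := Finset.mem_image.1 hy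
    have h1 := hd a ha b hbB
    have h2 := tp_dist_path_le hn a b (by have := a.isLt; omega)
      (by have := hPB b hbB; have := b.isLt; omega)
    omega
  by_cases hPA : ∃ a ∈ A, a.val = n - 1
  · obtain ⟨a₀, ha₀A, ha₀⟩ := hPA
    set X' := (A.erase a₀).image Fin.val with hX'
    have hX'card : X'.card = s - 1 := by
      rw [hX', Finset.card_image_of_injective _ Fin.val_injective,
        Finset.card_erase_of_mem ha₀A, hA]
    have hX'b : ∀ x ∈ X', x < n - 1 := by
      intro x hx
      obtain ⟨a, haA, rfl⟩ := Finset.mem_image.1 hx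
      have hne : a ≠ a₀ := (Finset.mem_erase.1 haA).1
      have := a.isLt
      by_contra hcc
      exact hne (Fin.ext (by omega))
    have hsepX' : ∀ x ∈ X', ∀ y ∈ Y, x + (n - 2*s + 1) ≤ y ∨ y + (n - 2*s + 1) ≤ x := by
      intro x hx y hy
      obtain ⟨a, haA, rfl⟩ := Finset.mem_image.1 hx
      have hxb := hX'b a.val hx
      exact hsepA a (Finset.mem_of_mem_erase haA) (by omega) y hy
    have hsepP : ∀ y ∈ Y, s + (n - 2*s) ≤ y ∨ y + (n - 2*s) ≤ s := by
      intro y hy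
      obtain ⟨b, hbB, rfl⟩ := Finset.mem_image.1 hy
      have h1 := hd a₀ ha₀A b hbB
      have h2 := tp_dist_pend_le hn b a₀ (by have := hPB b hbB; have := b.isLt; omega) ha₀
      rw [SimpleGraph.dist_comm] at h1
      omega
    by_cases hsX : s ∈ X'
    · exact core (n-1) (n - 2*s + 1) s X' Y hX'b hYb (by omega) hsepX' hYne hsX
        (by omega) (by omega) (by omega)
    · have hXcard : (insert s X').card = s := by
        rw [Finset.card_insert_of_notMem hsX, hX'card]; omega
      refine core (n-1) (n - 2*s) s (insert s X') Y ?_ hYb (by omega) ?_ hYne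
        (Finset.mem_insert_self s X') (by omega) (by omega) (by omega)
      · intro x hx
        rcases Finset.mem_insert.1 hx with rfl | hx
        · omega
        · exact hX'b x hx
      · intro x hx y hy
        rcases Finset.mem_insert.1 hx with rfl | hx
        · exact hsepP y hy
        · have := hsepX' x hx y hy; omega
  · push_neg at hPA
    set X := A.image Fin.val with hXdef
    have hXcard : X.card = s := by
      rw [hXdef, Finset.card_image_of_injective _ Fin.val_injective, hA]
    have hXb : ∀ x ∈ X, x < n - 1 := by
      intro x hx
      obtain ⟨a, haA, rfl⟩ := Finset.mem_image.1 hx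
      have := hPA a haA
      have := a.isLt
      omega
    have := sep_card (n-1) (n - 2*s + 1) X Y hXb hYb
      (Finset.card_pos.1 (by omega)) hYne (by omega)
      (by
        intro x hx y hy
        obtain ⟨a, haA, rfl⟩ := Finset.mem_image.1 hx
        exact hsepA a haA (by have := hPA a haA; omega) y hy)
    omega

lemma tp_setDist_le (hs : 1 ≤ s) (hn : 2*s+3 ≤ n) (A B : Finset (Fin n))
    (hA : A.card = s) (hB : B.card = s) :
    setDist (Tpend n (s+1)) A B ≤ n - 2*s := by
  classical
  by_cases hPB : ∀ b ∈ B, b.val ≠ n - 1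
  · obtain ⟨a, ha, b, hb, hab⟩ := tp_pair hs hn A B hA hB hPB
    exact le_trans (Nat.sInf_le ⟨a, ha, b, hb, rfl⟩) hab
  · push_neg at hPB
    obtain ⟨b₀, hb₀B, hb₀⟩ := hPB
    by_cases hPA : ∀ a ∈ A, a.val ≠ n - 1
    · obtain ⟨b, hb, a, ha, hab⟩ := tp_pair hs hn B A hB hA hPA
      refine le_trans (Nat.sInf_le ⟨a, ha, b, hb, rfl⟩) ?_
      rw [SimpleGraph.dist_comm]
      exact hab
    · push_neg at hPA
      obtain ⟨a₀, ha₀A, ha₀⟩ := hPA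
      have : a₀ = b₀ := Fin.ext (by omega)
      subst this
      refine le_trans (Nat.sInf_le ⟨a₀, ha₀A, a₀, hb₀B, rfl⟩) ?_
      rw [SimpleGraph.dist_self]; exact Nat.zero_le _

lemma tp_exhibit (hs : 1 ≤ s) (hn : 2*s+3 ≤ n) :
    ∃ A B : Finset (Fin n), A.card = s ∧ B.card = s ∧
      setDist (Tpend n (s+1)) A B = n - 2*s := by
  classical
  have hsn : s < n := by omega
  have hboundA : ∀ m ∈ Finset.range s, m < n := fun m hm => lt_trans (Finset.mem_range.1 hm) hsn
  have hboundB : ∀ m ∈ (Finset.range s).image (fun i => n - 1 - s + i), m < n := by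
    intro m hm
    obtain ⟨i, hi, rfl⟩ := Finset.mem_image.1 hm
    rw [Finset.mem_range] at hi
    omega
  set A := (Finset.range s).attachFin hboundA with hAdef
  set B := ((Finset.range s).image (fun i => n - 1 - s + i)).attachFin hboundB with hBdef
  have hmemA : ∀ a : Fin n, a ∈ A ↔ a.val < s := by
    intro a
    rw [hAdef, Finset.mem_attachFin, Finset.mem_range]
  have hmemB : ∀ b : Fin n, b ∈ B → n - 1 - s ≤ b.val ∧ b.val ≤ n - 2 := by
    intro b hb
    rw [hBdef, Finset.mem_attachFin] at hb
    obtain ⟨i, hi, hib⟩ := Finset.mem_image.1 hb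
    rw [Finset.mem_range] at hi
    omega
  have hx : s - 1 < n := by omega
  have hy : n - 1 - s < n := by omega
  have hxv : ((⟨s - 1, hx⟩ : Fin n)).val = s - 1 := rfl
  have hyv : ((⟨n - 1 - s, hy⟩ : Fin n)).val = n - 1 - s := rfl
  have hbB : (⟨n - 1 - s, hy⟩ : Fin n) ∈ B := by
    rw [hBdef, Finset.mem_attachFin]
    exact Finset.mem_image.2 ⟨0, Finset.mem_range.2 hs, by dsimp only; omega⟩
  have haA : (⟨s - 1, hx⟩ : Fin n) ∈ A := (hmemA _).2 (by omega)
  have hdxy : (Tpend n (s+1)).dist ⟨s - 1, hx⟩ ⟨n - 1 - s, hy⟩ = n - 2*s := by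
    apply le_antisymm
    · have h := tp_dist_path_le hn (⟨s - 1, hx⟩ : Fin n) ⟨n - 1 - s, hy⟩
        (by omega) (by omega)
      omega
    · have h := tp_dist_path_ge hn (⟨s - 1, hx⟩ : Fin n) ⟨n - 1 - s, hy⟩
        (by omega) (by omega)
      omega
  refine ⟨A, B, ?_, ?_, ?_⟩
  · rw [hAdef, Finset.card_attachFin, Finset.card_range]
  · rw [hBdef, Finset.card_attachFin, Finset.card_image_of_injective, Finset.card_range]
    intro i j h
    dsimp only at h
    omega
  · apply le_antisymm
    · exact Nat.sInf_le ⟨⟨s - 1, hx⟩, haA, ⟨n - 1 - s, hy⟩, hbB, hdxy⟩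
    · apply le_csInf
      · exact ⟨(Tpend n (s+1)).dist ⟨s - 1, hx⟩ ⟨n - 1 - s, hy⟩,
          ⟨s - 1, hx⟩, haA, ⟨n - 1 - s, hy⟩, hbB, rfl⟩
      · rintro d ⟨a, ha, b, hb, rfl⟩
        have haa := (hmemA a).1 ha
        have hbb := hmemB b hb
        have := tp_dist_path_ge hn a b (by omega) (by omega)
        omega
end TP

theorem stmt11 (n s : ℕ) (hs : 1 ≤ s) (hn : 2 * s + 3 ≤ n) :
    condDiam (Tpend n (s + 1)) s = n - 2 * s := by
  obtain ⟨A₀, B₀, hA₀, hB₀, hd₀⟩ := tp_exhibit hs hn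
  rw [condDiam]
  have hub : ∀ d ∈ {d | ∃ A B : Finset (Fin n), A.card = s ∧ B.card = s ∧
      setDist (Tpend n (s + 1)) A B = d}, d ≤ n - 2 * s := by
    rintro d ⟨A, B, hA, hB, rfl⟩
    exact tp_setDist_le hs hn A B hA hB
  have hmem : (n - 2 * s) ∈ {d | ∃ A B : Finset (Fin n), A.card = s ∧ B.card = s ∧
      setDist (Tpend n (s + 1)) A B = d} := ⟨A₀, B₀, hA₀, hB₀, hd₀⟩
  exact le_antisymm (csSup_le ⟨_, hmem⟩ hub) (le_csSup ⟨n - 2 * s, hub⟩ hmem)
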